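/- arXiv:2502.19853 — 3 statements merged into one kernel-verified Lean document; each statement's English description precedes it below -/
import Mathlib

section
/- Non-abelian Snake Lemma: given a commutative diagram of (not necessarily abelian) groups with exact rows G₁ → G₂ →^s G₃ → 1 and 1 → H₁ → H₂ → H₃, vertical homomorphisms v : G₁ → H₁, w : G₂ → H₂, r : G₃ → H₃ making the squares commute, and exact columns continuing to cokernels u : H₁ → K₁, H₂ → K₂, H₃ → K₃ (each column G_i → H_i → K_i → 1 exact at H_i and K_i), there exists a connecting homomorphism Δ : ker(r) → K₁ such that the sequence ker(v) → ker(w) → ker(r) →^Δ K₁ →^t K₂ → K₃ is exact. -/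
/-- Exactness of a pair of group homomorphisms at the middle group:
the kernel of `g` equals the range of `f`. -/
def HomExact {A B C : Type*} [Group A] [Group B] [Group C]
    (f : A →* B) (g : B →* C) : Prop :=
  ∀ b : B, g b = 1 ↔ b ∈ Set.range f

/-- The restriction of `f : G₁ →* G₂` to a map `ker v →* ker w`, given a commuting
square `ι ∘ v = w ∘ f`. -/
def kerMap {G₁ G₂ H₁ H₂ : Type*} [Group G₁] [Group G₂] [Group H₁] [Group H₂]
    (f : G₁ →* G₂) (v : G₁ →* H₁) (w : G₂ →* H₂) (ι : H₁ →* H₂)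
    (hsq : ∀ g, ι (v g) = w (f g)) : v.ker →* w.ker :=
  (f.comp v.ker.subtype).codRestrict w.ker (fun x => by
    have hx : v (x : G₁) = 1 := x.2
    have : w (f (x : G₁)) = 1 := by rw [← hsq, hx, map_one]
    simpa [MonoidHom.mem_ker] using this)

/-- Non-abelian Snake Lemma. -/
theorem snake_lemma
    {G₁ G₂ G₃ H₁ H₂ H₃ K₁ K₂ K₃ : Type*}
    [Group G₁] [Group G₂] [Group G₃] [Group H₁] [Group H₂] [Group H₃]
    [Group K₁] [Group K₂] [Group K₃]
    (f : G₁ →* G₂) (s : G₂ →* G₃)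
    (ι : H₁ →* H₂) (j : H₂ →* H₃)
    (v : G₁ →* H₁) (w : G₂ →* H₂) (r : G₃ →* H₃)
    (u₁ : H₁ →* K₁) (u₂ : H₂ →* K₂) (u₃ : H₃ →* K₃)
    (t : K₁ →* K₂) (t' : K₂ →* K₃)
    -- top row exact at G₂ and at G₃ (`s` surjective)
    (hrow1 : HomExact f s) (hs : Function.Surjective s)
    -- bottom row exact at H₁ (`ι` injective) and at H₂
    (hι : Function.Injective ι) (hrow2 : HomExact ι j)
    -- commuting squares
    (hsq1 : ∀ g, ι (v g) = w (f g))
    (hsq2 : ∀ g, j (w g) = r (s g))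
    (hsq3 : ∀ h, t (u₁ h) = u₂ (ι h))
    (hsq4 : ∀ h, t' (u₂ h) = u₃ (j h))
    -- columns exact at H_i and at K_i (the `u_i` are surjections onto the cokernels)
    (hcol1 : HomExact v u₁) (hu₁ : Function.Surjective u₁)
    (hcol2 : HomExact w u₂) (hu₂ : Function.Surjective u₂)
    (hcol3 : HomExact r u₃) (hu₃ : Function.Surjective u₃) :
    ∃ Δ : r.ker →* K₁,
      HomExact (kerMap f v w ι hsq1) (kerMap s w r j hsq2) ∧
      HomExact (kerMap s w r j hsq2) Δ ∧
      HomExact Δ t ∧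
      HomExact t t' := by
  classical
  have huv : ∀ a : G₁, u₁ (v a) = 1 := fun a => (hcol1 (v a)).2 ⟨a, rfl⟩
  have hsf : ∀ a : G₁, s (f a) = 1 := fun a => (hrow1 (f a)).2 ⟨a, rfl⟩
  have huw : ∀ g : G₂, u₂ (w g) = 1 := fun g => (hcol2 (w g)).2 ⟨g, rfl⟩
  have hjι : ∀ h : H₁, j (ι h) = 1 := fun h => (hrow2 (ι h)).2 ⟨h, rfl⟩
  -- choose lifts along `s`
  choose lift hlift using hs
  have hker : ∀ x : r.ker, ∃ h : H₁, ι h = w (lift (x : G₃)) := by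
    intro x
    have hx : r (x : G₃) = 1 := x.2
    have : j (w (lift (x : G₃))) = 1 := by rw [hsq2, hlift, hx]
    exact (hrow2 _).1 this
  choose hh hhh using hker
  -- well-definedness of the connecting map
  have wd : ∀ (g g' : G₂) (h h' : H₁), s g = s g' → ι h = w g → ι h' = w g' →
      u₁ h = u₁ h' := by
    intro g g' h h' hss hhg hhg'
    have h1 : s (g⁻¹ * g') = 1 := by
      rw [map_mul, map_inv, ← hss, inv_mul_cancel]
    rcases (hrow1 _).1 h1 with ⟨a, ha⟩
    have h2 : ι (h * v a) = ι h' := by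
      rw [map_mul, hsq1, ha, hhg, hhg', ← map_mul, mul_inv_cancel_left]
    have h3 : h * v a = h' := hι h2
    rw [← h3, map_mul, huv, mul_one]
  have wdΔ : ∀ (x : r.ker) (g : G₂) (h : H₁), s g = (x : G₃) → ι h = w g →
      u₁ (hh x) = u₁ h := fun x g h hg hih =>
    wd _ _ _ _ (by rw [hlift, hg]) (hhh x) hih
  refine ⟨MonoidHom.mk' (fun x => u₁ (hh x)) ?_, ?_, ?_, ?_, ?_⟩
  · -- Δ is multiplicative
    intro x y
    rw [← map_mul]
    exact wdΔ (x * y) (lift (x : G₃) * lift (y : G₃)) (hh x * hh y)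
      (by rw [map_mul, hlift, hlift]; rfl)
      (by rw [map_mul, map_mul, hhh, hhh])
  · -- exactness at ker w
    intro b
    constructor
    · intro hb
      have hsb : s (b : G₂) = 1 := by
        have := congrArg Subtype.val hb
        simpa [kerMap] using this
      rcases (hrow1 _).1 hsb with ⟨a, ha⟩
      have hwb : w (b : G₂) = 1 := b.2
      have hva : v a = 1 := hι (by rw [hsq1, ha, hwb, map_one])
      refine ⟨⟨a, hva⟩, ?_⟩
      ext
      simpa [kerMap] using ha
    · rintro ⟨⟨a, _⟩, rfl⟩
      ext
      simpa [kerMap] using hsf a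
  · -- exactness at ker r
    intro x
    constructor
    · intro hx
      have hx' : u₁ (hh x) = 1 := hx
      rcases (hcol1 _).1 hx' with ⟨a, ha⟩
      have hw : w (lift (x : G₃) * (f a)⁻¹) = 1 := by
        rw [map_mul, map_inv, ← hsq1, ha, hhh, mul_inv_cancel]
      refine ⟨⟨lift (x : G₃) * (f a)⁻¹, (by simpa [MonoidHom.mem_ker] using hw)⟩, ?_⟩
      ext
      show s (lift (x : G₃) * (f a)⁻¹) = (x : G₃)
      rw [map_mul, map_inv, hlift, hsf, inv_one, mul_one]
    · rintro ⟨b, rfl⟩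
      have hwb : w (b : G₂) = 1 := b.2
      show u₁ (hh _) = 1
      have := wdΔ (kerMap s w r j hsq2 b) (b : G₂) 1 rfl (by rw [map_one, hwb])
      rw [this, map_one]
  · -- exactness at K₁
    intro k
    constructor
    · intro hk
      rcases hu₁ k with ⟨h, rfl⟩
      have h1 : u₂ (ι h) = 1 := by rw [← hsq3]; exact hk
      rcases (hcol2 _).1 h1 with ⟨g, hg⟩
      have hrs : r (s g) = 1 := by rw [← hsq2, hg, hjι]
      refine ⟨⟨s g, (by simpa [MonoidHom.mem_ker] using hrs)⟩, ?_⟩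
      exact wdΔ ⟨s g, (by simpa [MonoidHom.mem_ker] using hrs)⟩ g h rfl hg.symm
    · rintro ⟨x, rfl⟩
      show t (u₁ (hh x)) = 1
      rw [hsq3, hhh, huw]
  · -- exactness at K₂
    intro k
    constructor
    · intro hk
      rcases hu₂ k with ⟨h₂, rfl⟩
      have h1 : u₃ (j h₂) = 1 := by rw [← hsq4]; exact hk
      rcases (hcol3 _).1 h1 with ⟨x, hx⟩
      have h2 : j (h₂ * (w (lift x))⁻¹) = 1 := by
        rw [map_mul, map_inv, hsq2, hlift, hx, mul_inv_cancel]
      rcases (hrow2 _).1 h2 with ⟨h₁, hh₁⟩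
      refine ⟨u₁ h₁, ?_⟩
      rw [hsq3, hh₁, map_mul, map_inv, huw, inv_one, mul_one]
    · rintro ⟨k₁, rfl⟩
      rcases hu₁ k₁ with ⟨h₁, rfl⟩
      rw [hsq3, hsq4, hjι, map_one]
end

section
/- In the setting of the non-abelian snake lemma, if the induced map t : K₁ → K₂ is injective, then the restriction s|_{ker(w)} : ker(w) → ker(r) is surjective. -/
/-- In the snake-lemma diagram, if the induced map `t : K₁ →* K₂` between the
cokernels is injective, then the restriction of `s` to `ker w` maps onto `ker r`. -/
theorem snake_lemma_surjective_on_kernels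
    {G₁ G₂ G₃ H₁ H₂ H₃ K₁ K₂ K₃ : Type*}
    [Group G₁] [Group G₂] [Group G₃] [Group H₁] [Group H₂] [Group H₃]
    [Group K₁] [Group K₂] [Group K₃]
    (f : G₁ →* G₂) (s : G₂ →* G₃)
    (ι : H₁ →* H₂) (j : H₂ →* H₃)
    (v : G₁ →* H₁) (w : G₂ →* H₂) (r : G₃ →* H₃)
    (u₁ : H₁ →* K₁) (u₂ : H₂ →* K₂) (u₃ : H₃ →* K₃)
    (t : K₁ →* K₂) (t' : K₂ →* K₃)
    (hrow1 : HomExact f s) (hs : Function.Surjective s)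
    (hι : Function.Injective ι) (hrow2 : HomExact ι j)
    (hsq1 : ∀ g, ι (v g) = w (f g))
    (hsq2 : ∀ g, j (w g) = r (s g))
    (hsq3 : ∀ h, t (u₁ h) = u₂ (ι h))
    (hsq4 : ∀ h, t' (u₂ h) = u₃ (j h))
    (hcol1 : HomExact v u₁) (hu₁ : Function.Surjective u₁)
    (hcol2 : HomExact w u₂) (hu₂ : Function.Surjective u₂)
    (hcol3 : HomExact r u₃) (hu₃ : Function.Surjective u₃)
    (ht : Function.Injective t) :
    ∀ c ∈ r.ker, ∃ b ∈ w.ker, s b = c := by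
  intro c hc
  obtain ⟨b, rfl⟩ := hs c
  have hjwb : j (w b) = 1 := by rw [hsq2]; exact hc
  obtain ⟨h, hh⟩ := (hrow2 (w b)).mp hjwb
  have hu1h : t (u₁ h) = 1 := by
    rw [hsq3, hh]; exact (hcol2 (w b)).mpr ⟨b, rfl⟩
  have : u₁ h = 1 := ht (by rw [hu1h, map_one])
  obtain ⟨a, ha⟩ := (hcol1 h).mp this
  refine ⟨b * (f a)⁻¹, ?_, ?_⟩
  · have : w (f a) = w b := by rw [← hsq1, ha, hh]
    simp [MonoidHom.mem_ker, this]
  · have : s (f a) = 1 := (hrow1 (f a)).mpr ⟨a, rfl⟩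
    simp [this]
end

section
/- The connecting homomorphism in the non-abelian snake lemma is well defined: if α ∈ ker(r) and β, β' ∈ G₂ satisfy s(β) = s(β') = α, then w(β) and w(β') lie in H₁ (identified with its image in H₂) and u(w(β)) = u(w(β')) in K₁. -/
/-- Well-definedness of the connecting homomorphism in the non-abelian snake lemma:
if `α ∈ ker r` and `β, β' ∈ G₂` both map to `α` under `s`, then `w β` and `w β'`
lie in (the image of) `H₁`, and the corresponding elements of `H₁` have the same
image under `u : H₁ →* K₁`. -/
theorem connecting_hom_well_defined
    {G₁ G₂ G₃ H₁ H₂ H₃ K₁ : Type*}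
    [Group G₁] [Group G₂] [Group G₃] [Group H₁] [Group H₂] [Group H₃] [Group K₁]
    (f : G₁ →* G₂) (s : G₂ →* G₃)
    (ι : H₁ →* H₂) (j : H₂ →* H₃)
    (v : G₁ →* H₁) (w : G₂ →* H₂) (r : G₃ →* H₃)
    (u : H₁ →* K₁)
    (hrow1 : HomExact f s) (hs : Function.Surjective s)
    (hι : Function.Injective ι) (hrow2 : HomExact ι j)
    (hsq1 : ∀ g, ι (v g) = w (f g))
    (hsq2 : ∀ g, j (w g) = r (s g))
    (hcol1 : HomExact v u)
    (α : G₃) (hα : r α = 1)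
    (β β' : G₂) (hβ : s β = α) (hβ' : s β' = α) :
    w β ∈ Set.range ι ∧ w β' ∈ Set.range ι ∧
    ∀ a a' : H₁, ι a = w β → ι a' = w β' → u a = u a' := by
  have hwβ : w β ∈ Set.range ι := (hrow2 _).mp (by rw [hsq2, hβ, hα])
  have hwβ' : w β' ∈ Set.range ι := (hrow2 _).mp (by rw [hsq2, hβ', hα])
  refine ⟨hwβ, hwβ', fun a a' ha ha' => ?_⟩
  obtain ⟨g, hg⟩ : β'⁻¹ * β ∈ Set.range f :=
    (hrow1 _).mp (by rw [map_mul, map_inv, hβ, hβ', inv_mul_cancel])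
  have key : a = a' * v g := by
    apply hι
    rw [map_mul, ha, ha', hsq1, hg, map_mul, map_inv, mul_inv_cancel_left]
  have huv : u (v g) = 1 := (hcol1 _).mpr ⟨g, rfl⟩
  rw [key, map_mul, huv, mul_one]
end
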